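/- The 18-uniform morphism h on {0,1,2} given by h(0)=012021020102120210, h(1)=120102101210201021, h(2)=201210212021012102 is square-free, and so is the 17-uniform morphism h' given by h'(0)=01202120102120210, h'(1)=12010201210201021, h'(2)=20121012021012102. -/

import Mathlib

set_option linter.unusedSectionVars false

def SqFreeWord {α : Type*} (w : List α) : Prop :=
  ∀ x : List α, x ≠ [] → ¬ (x ++ x) <:+: w

def hmorph : Fin 3 → List (Fin 3)
  | 0 => [0,1,2,0,2,1,0,2,0,1,0,2,1,2,0,2,1,0]
  | 1 => [1,2,0,1,0,2,1,0,1,2,1,0,2,0,1,0,2,1]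
  | 2 => [2,0,1,2,1,0,2,1,2,0,2,1,0,1,2,1,0,2]

def hmorph' : Fin 3 → List (Fin 3)
  | 0 => [0,1,2,0,2,1,2,0,1,0,2,1,2,0,2,1,0]
  | 1 => [1,2,0,1,0,2,0,1,2,1,0,2,0,1,0,2,1]
  | 2 => [2,0,1,2,1,0,1,2,0,2,1,0,1,2,1,0,2]

section Infra
variable {α : Type*} [Inhabited α]

lemma gE {l : List α} {i : ℕ} (h : i < l.length) : l[i]! = l[i] := getElem!_pos l i h

lemma ext! {l₁ l₂ : List α} (hlen : l₁.length = l₂.length)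
    (h : ∀ i < l₁.length, l₁[i]! = l₂[i]!) : l₁ = l₂ := by
  refine List.ext_getElem hlen (fun n h₁ h₂ => ?_)
  rw [← gE h₁, ← gE h₂]; exact h n h₁

lemma gappL {l₁ l₂ : List α} {i : ℕ} (h : i < l₁.length) : (l₁ ++ l₂)[i]! = l₁[i]! := by
  rw [gE h, gE (show i < (l₁ ++ l₂).length by simp; omega), List.getElem_append_left h]

lemma gappR {l₁ l₂ : List α} {i : ℕ} (h : i < l₂.length) :
    (l₁ ++ l₂)[l₁.length + i]! = l₂[i]! := by
  rw [gE h, gE (show l₁.length + i < (l₁ ++ l₂).length by simp; omega),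
    List.getElem_append_right (by omega)]
  congr 1; omega

lemma gtake {l : List α} {n i : ℕ} (h1 : i < n) (h2 : i < l.length) :
    (l.take n)[i]! = l[i]! := by
  rw [gE h2, gE (show i < (l.take n).length by simp; omega), List.getElem_take]

lemma gdrop {l : List α} {n i : ℕ} (h : n + i < l.length) :
    (l.drop n)[i]! = l[n + i]! := by
  rw [gE h, gE (show i < (l.drop n).length by simp; omega), List.getElem_drop]

lemma not_sqfree_of_E {W : List α} {p L : ℕ} (hL : 0 < L) (hb : p + 2 * L ≤ W.length)
    (E : ∀ t < L, W[p + t]! = W[p + L + t]!) : ¬ SqFreeWord W := by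
  intro hs
  set x : List α := (W.drop p).take L with hx
  have hxlen : x.length = L := by simp [hx]; omega
  have hsec : (W.drop (p + L)).take L = x := by
    refine ext! (by simp; omega) ?_
    intro i hi
    have hi' : i < L := by simpa [show ((W.drop (p+L)).take L).length = L by simp; omega] using hi
    rw [gtake hi' (by simp; omega), gdrop (by omega), hx,
      gtake hi' (by simp; omega), gdrop (by omega)]
    exact (E i hi').symm
  have hxx : x ++ x = (W.drop p).take (2 * L) := by
    rw [two_mul, List.take_add, List.drop_drop, hsec]
  refine hs x (List.ne_nil_of_length_pos (by omega)) ?_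
  rw [hxx]
  exact ((List.take_prefix _ _).isInfix).trans (List.drop_suffix p W).isInfix

lemma E_of_square {W x u v : List α} (hW : u ++ (x ++ x) ++ v = W) :
    u.length + 2 * x.length ≤ W.length ∧
    ∀ t < x.length, W[u.length + t]! = W[u.length + x.length + t]! := by
  subst hW
  constructor
  · simp; omega
  · intro t ht
    rw [gappL (l₂ := v) (by simp; omega), gappL (l₂ := v) (by simp; omega),
      gappR (l₁ := u) (by simp; omega)]
    have h2 : u.length + x.length + t = u.length + (x.length + t) := by omega
    rw [h2, gappR (l₁ := u) (by simp; omega), gappL ht, gappR ht]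

lemma sqfree_of_check (W : List α)
    (hc : ∀ p < W.length, ∀ L < W.length / 2 + 1, 0 < L → p + 2 * L ≤ W.length →
      ¬ ((W.drop p).take L = (W.drop (p + L)).take L)) : SqFreeWord W := by
  rintro x hx ⟨u, v, huv⟩
  have hxl : 0 < x.length := List.length_pos_iff.mpr hx
  have hWl : W.length = u.length + 2 * x.length + v.length := by
    rw [← huv]; simp; omega
  have hd1 : W.drop u.length = (x ++ x) ++ v := by
    rw [← huv, List.append_assoc, List.drop_left]
  have ht1 : (W.drop u.length).take x.length = x := by
    rw [hd1, List.append_assoc, List.take_append_of_le_length le_rfl]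
    simp
  have hd2 : W.drop (u.length + x.length) = x ++ v := by
    rw [← List.drop_drop, hd1, List.append_assoc, List.drop_left]
  have ht2 : (W.drop (u.length + x.length)).take x.length = x := by
    rw [hd2, List.take_append_of_le_length le_rfl]; simp
  exact hc u.length (by omega) x.length (by omega) hxl (by omega) (ht1.trans ht2.symm)

lemma sqfree_infix {y W : List α} (hyW : y <:+: W) (hW : SqFreeWord W) : SqFreeWord y :=
  fun x hx hxy => hW x hx (hxy.trans hyW)

lemma infix_of_middle {u m v U Z V : List α} (he : u ++ m ++ v = U ++ Z ++ V)
    (h1 : U.length ≤ u.length) (h2 : u.length + m.length ≤ U.length + Z.length) :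
    m <:+: Z := by
  have hm : m = ((u ++ m ++ v).drop u.length).take m.length := by
    rw [List.append_assoc, List.drop_left, List.take_append_of_le_length le_rfl]
    simp
  have hδ : u.length = U.length + (u.length - U.length) := by omega
  rw [he, List.append_assoc, hδ, List.drop_length_add_append,
    List.drop_append_of_le_length (by omega),
    List.take_append_of_le_length (by simp; omega)] at hm
  rw [hm]
  exact ((List.take_prefix _ _).isInfix).trans (List.drop_suffix _ Z).isInfix

lemma adj_ne {a b : α} {l : List α} (h : SqFreeWord (a :: b :: l)) : a ≠ b := by
  rintro rfl
  exact h [a] (by simp) ⟨[], l, by simp⟩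
section Morph
set_option linter.unusedSectionVars false
variable {α : Type*} [Inhabited α] (h : α → List α) (k : ℕ)

lemma flatten_length (hk : ∀ a, (h a).length = k) (w : List α) :
    ((w.map h).flatten).length = k * w.length := by
  induction w with
  | nil => simp
  | cons a w ih => simp [hk, ih]; ring

lemma flatten_get (hk : ∀ a, (h a).length = k) (w : List α) (j t : ℕ)
    (hj : j < w.length) (ht : t < k) :
    ((w.map h).flatten)[k * j + t]! = (h (w[j]!))[t]! := by
  induction w generalizing j with
  | nil => simp at hj
  | cons a w ih =>
    cases j with
    | zero =>
      rw [List.map_cons, List.flatten_cons, Nat.mul_zero, Nat.zero_add,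
        gappL (by rw [hk]; exact ht)]
      congr 2
    | succ j =>
      have hj' : j < w.length := by simpa using hj
      rw [List.map_cons, List.flatten_cons]
      have e : k * (j + 1) + t = (h a).length + (k * j + t) := by
        rw [hk, Nat.mul_succ]; omega
      have hlt : k * j + t < ((w.map h).flatten).length := by
        rw [flatten_length h k hk w]
        have := Nat.mul_le_mul_left k (show j + 1 ≤ w.length from hj')
        rw [Nat.mul_succ] at this; omega
      rw [e, gappR hlt, ih j hj']
      congr 2

end Morph

theorem key {α : Type*} [Inhabited α] (h : α → List α) (k : ℕ) (hkpos : 0 < k)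
    (hk : ∀ a, (h a).length = k)
    (hinj : ∀ a b, h a = h b → a = b)
    (hsync : ∀ a b c : α, ∀ r, 0 < r → r < k →
      ¬ ((h b ++ h c).drop r).take k = h a)
    (h1 : ∀ a, SqFreeWord (h a))
    (h2 : ∀ a b : α, a ≠ b → SqFreeWord (h a ++ h b))
    (h3 : ∀ a b c : α, a ≠ b → b ≠ c → SqFreeWord (h a ++ h b ++ h c)) :
    ∀ w : List α, SqFreeWord w → SqFreeWord ((w.map h).flatten) := by
  intro w hw
  set W := (w.map h).flatten with hWdef
  set n := w.length with hn
  have hWlen : W.length = k * n := flatten_length h k hk w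
  have hblock : ∀ j t, j < n → t < k → W[k * j + t]! = (h (w[j]!))[t]! :=
    fun j t hj ht => flatten_get h k hk w j t hj ht
  rintro x hx ⟨u, v, huv⟩
  set p := u.length with hp
  set L := x.length with hLdef
  have hL : 0 < L := List.length_pos_iff.mpr hx
  obtain ⟨hbound, E⟩ := E_of_square huv
  rw [hWlen] at hbound
  simp only [← hp, ← hLdef] at hbound E
  set r := p % k with hr
  set j0 := p / k with hj0
  have hpdecomp : k * j0 + r = p := Nat.div_add_mod p k
  have hrk : r < k := Nat.mod_lt _ hkpos
  have hj0n : j0 < n := by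
    rw [hj0, Nat.div_lt_iff_lt_mul hkpos]
    have : n * k = k * n := Nat.mul_comm n k
    omega
  by_cases hcaseA : r + 2 * L ≤ 3 * k
  · -- Case A: the square fits in at most 3 consecutive blocks
    set z := (w.drop j0).take 3 with hz
    have hzlen : z.length = min 3 (n - j0) := by simp [hz, hn]
    have hwdec : w.take j0 ++ z ++ (w.drop j0).drop 3 = w := by
      rw [List.append_assoc, hz, List.take_append_drop, List.take_append_drop]
    have hzinf : z <:+: w := ⟨w.take j0, (w.drop j0).drop 3, hwdec⟩
    have hWdec : ((w.take j0).map h).flatten ++ (z.map h).flatten ++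
        (((w.drop j0).drop 3).map h).flatten = W := by
      conv_rhs => rw [hWdef, ← hwdec]
      rw [List.map_append, List.map_append, List.flatten_append, List.flatten_append]
    have hUlen : (((w.take j0).map h).flatten).length = k * j0 := by
      rw [flatten_length h k hk]
      congr 1
      simp [hn]; omega
    have hZlen : ((z.map h).flatten).length = k * z.length := flatten_length h k hk z
    have hxxZ : x ++ x <:+: (z.map h).flatten := by
      refine infix_of_middle (huv.trans hWdec.symm) ?_ ?_
      · rw [hUlen]; omega
      · rw [hUlen, hZlen]
        have hxxlen : (x ++ x).length = 2 * L := by simp [hLdef]; omega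
        rw [hxxlen]
        rcases Nat.le_total 3 (n - j0) with hc | hc
        · have : z.length = 3 := by omega
          rw [this]; omega
        · have : z.length = n - j0 := by omega
          rw [this]
          have : k * j0 + k * (n - j0) = k * n := by rw [← Nat.mul_add]; congr 1; omega
          omega
    have hzsf : SqFreeWord z := sqfree_infix hzinf hw
    have hZsf : SqFreeWord (z.map h).flatten := by
      have hz3 : z.length ≤ 3 := by omega
      have hz0 : 0 < z.length := by omega
      rcases z with _ | ⟨a, _ | ⟨b, _ | ⟨c, _ | ⟨d, z'⟩⟩⟩⟩
      · simp at hz0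
      · simpa using h1 a
      · have hab : a ≠ b := adj_ne hzsf
        simpa using h2 a b hab
      · have hab : a ≠ b := adj_ne hzsf
        have hbc : b ≠ c := adj_ne (sqfree_infix (show [b, c] <:+: [a, b, c] from ⟨[a], [], rfl⟩) hzsf)
        have := h3 a b c hab hbc
        simpa [List.append_assoc] using this
      · simp at hz3; omega
    exact hZsf x hx hxxZ
  · -- Case B: long square
    push_neg at hcaseA
    have hLk : k < L := by omega
    -- the first aligned block start at or after p
    set q0 := p + (k - r) % k with hq0
    have hq0dvd : k ∣ q0 := by
      rcases Nat.eq_zero_or_pos r with h0 | hposr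
      · refine ⟨j0, ?_⟩
        rw [hq0, h0, Nat.sub_zero, Nat.mod_self]; omega
      · refine ⟨j0 + 1, ?_⟩
        rw [hq0, Nat.mod_eq_of_lt (by omega), Nat.mul_succ]; omega
    have hq0ub : q0 < p + k := by
      have := Nat.mod_lt (k - r) hkpos
      omega
    have hq02 : q0 + 2 * k ≤ p + 2 * L := by
      rcases Nat.eq_zero_or_pos r with h0 | hposr
      · rw [hq0, h0, Nat.sub_zero, Nat.mod_self]; omega
      · rw [hq0, Nat.mod_eq_of_lt (by omega)]; omega
    obtain ⟨ja, hja⟩ := hq0dvd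
    -- synchronization: any occurrence of a block image in W is aligned
    have syncstep : ∀ qh a, qh + k ≤ k * n →
        (∀ t < k, W[qh + t]! = (h a)[t]!) → qh % k = 0 := by
      intro qh a hqh hocc
      by_contra hne
      set r1 := qh % k with hr1
      set j1 := qh / k with hj1
      have hqd : k * j1 + r1 = qh := Nat.div_add_mod qh k
      have hr1k : r1 < k := Nat.mod_lt _ hkpos
      have hr1pos : 0 < r1 := Nat.pos_of_ne_zero hne
      have h1n : j1 + 1 < n := by
        have h2' : k * (j1 + 1) < k * n := by rw [Nat.mul_succ]; omega
        exact Nat.lt_of_mul_lt_mul_left h2'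
      refine hsync a (w[j1]!) (w[j1 + 1]!) r1 hr1pos hr1k ?_
      have hlen2 : (h (w[j1]!) ++ h (w[j1 + 1]!)).length = 2 * k := by
        simp [hk]; omega
      refine ext! ?_ ?_
      · rw [List.length_take, List.length_drop, hlen2, hk]; omega
      · intro t ht'
        have htk : t < k := by
          rw [List.length_take, List.length_drop, hlen2] at ht'; omega
        rw [gtake htk (by rw [List.length_drop, hlen2]; omega), gdrop (by rw [hlen2]; omega),
          ← hocc t htk]
        by_cases hlt : r1 + t < k
        · rw [gappL (by rw [hk]; exact hlt)]
          have e : qh + t = k * j1 + (r1 + t) := by omega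
          rw [e, hblock j1 (r1 + t) (by omega) hlt]
        · have e : r1 + t = (h (w[j1]!)).length + (r1 + t - k) := by rw [hk]; omega
          rw [e, gappR (by rw [hk]; omega)]
          have e2 : qh + t = k * (j1 + 1) + (r1 + t - k) := by rw [Nat.mul_succ]; omega
          rw [e2, hblock (j1 + 1) (r1 + t - k) h1n (by omega)]
    have hdvdL : k ∣ L := by
      by_cases hc1 : q0 + k ≤ p + L
      · -- block [q0, q0+k) inside the first copy; its image occurs at q0 + L
        have hjan : ja < n := by
          have h2' : k * (ja + 1) ≤ k * n := by rw [Nat.mul_succ]; omega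
          have := Nat.le_of_mul_le_mul_left h2' hkpos
          omega
        have hocc : ∀ t < k, W[q0 + L + t]! = (h (w[ja]!))[t]! := by
          intro t htk
          have e1 : q0 + L + t = p + L + (q0 - p + t) := by omega
          have e2 : q0 + t = p + (q0 - p + t) := by omega
          rw [e1, ← E (q0 - p + t) (by omega), ← e2]
          have e3 : q0 + t = k * ja + t := by omega
          rw [e3, hblock ja t hjan htk]
        have := syncstep (q0 + L) (w[ja]!) (by omega) hocc
        have hq0L : k ∣ q0 + L := Nat.dvd_of_mod_eq_zero this
        have : k ∣ (q0 + L) - q0 := Nat.dvd_sub hq0L ⟨ja, hja⟩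
        simpa using this
      · -- block [q0+k, q0+2k) inside the second copy; its image occurs at q0 + k - L
        push_neg at hc1
        have hjan : ja + 1 < n := by
          have h2' : k * (ja + 2) ≤ k * n := by rw [Nat.mul_add]; omega
          have := Nat.le_of_mul_le_mul_left h2' hkpos
          omega
        set qh := q0 + k - L with hqh
        have hocc : ∀ t < k, W[qh + t]! = (h (w[ja + 1]!))[t]! := by
          intro t htk
          have e1 : qh + t = p + (qh + t - p) := by omega
          have e2 : q0 + k + t = p + L + (qh + t - p) := by omega
          rw [e1, E (qh + t - p) (by omega), ← e2]
          have e3 : q0 + k + t = k * (ja + 1) + t := by rw [Nat.mul_succ]; omega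
          rw [e3, hblock (ja + 1) t hjan htk]
        have := syncstep qh (w[ja + 1]!) (by omega) hocc
        have hqhd : k ∣ qh := Nat.dvd_of_mod_eq_zero this
        have hq0k : k ∣ q0 + k := ⟨ja + 1, by rw [Nat.mul_succ]; omega⟩
        have : k ∣ (q0 + k) - qh := Nat.dvd_sub hq0k hqhd
        have e : (q0 + k) - qh = L := by omega
        rwa [e] at this
    obtain ⟨m, hm⟩ := hdvdL
    have hmpos : 0 < m := Nat.pos_of_ne_zero (by rintro rfl; rw [Nat.mul_zero] at hm; omega)
    have hkm : ∀ i, i < m → k * i + k ≤ k * m := by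
      intro i hi
      have := Nat.mul_le_mul_left k (show i + 1 ≤ m from hi)
      rwa [Nat.mul_succ] at this
    rcases Nat.eq_zero_or_pos r with hr0 | hrpos
    · -- aligned square: get a square in w directly
      have hjm : j0 + 2 * m ≤ n := by
        have h2' : k * (j0 + 2 * m) ≤ k * n := by
          rw [Nat.mul_add, Nat.mul_left_comm]
          omega
        exact Nat.le_of_mul_le_mul_left h2' hkpos
      have hww : ∀ i < m, w[j0 + i]! = w[j0 + m + i]! := by
        intro i hi
        have hkmi := hkm i hi
        refine hinj _ _ (ext! (by rw [hk, hk]) ?_)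
        intro t ht
        have htk : t < k := by rwa [hk] at ht
        rw [← hblock (j0 + i) t (by omega) htk, ← hblock (j0 + m + i) t (by omega) htk]
        have e1 : k * (j0 + i) + t = p + (k * i + t) := by rw [Nat.mul_add]; omega
        have e2 : k * (j0 + m + i) + t = p + L + (k * i + t) := by
          rw [Nat.mul_add, Nat.mul_add]; omega
        rw [e1, e2]
        exact E (k * i + t) (by omega)
      exact absurd hw (not_sqfree_of_E hmpos (by omega) hww)
    · -- unaligned square: build a square in h A ++ h B ++ h C
      have hjm : j0 + 2 * m < n := by
        have h2' : k * (j0 + 2 * m) < k * n := by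
          rw [Nat.mul_add, Nat.mul_left_comm]
          omega
        exact Nat.lt_of_mul_lt_mul_left h2'
      set A := w[j0]! with hA
      set B := w[j0 + m]! with hB
      set C := w[j0 + 2 * m]! with hC
      have hAB : ∀ t, r ≤ t → t < k → (h A)[t]! = (h B)[t]! := by
        intro t hrt htk
        rw [hA, hB, ← hblock j0 t (by omega) htk, ← hblock (j0 + m) t (by omega) htk]
        have e1 : k * j0 + t = p + (t - r) := by omega
        have e2 : k * (j0 + m) + t = p + L + (t - r) := by rw [Nat.mul_add]; omega
        rw [e1, e2]
        exact E (t - r) (by omega)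
      have hBC : ∀ t, t < r → (h B)[t]! = (h C)[t]! := by
        intro t htr
        have htk : t < k := by omega
        rw [hB, hC, ← hblock (j0 + m) t (by omega) htk,
          ← hblock (j0 + 2 * m) t (by omega) htk]
        have e1 : k * (j0 + m) + t = p + (L - r + t) := by rw [Nat.mul_add]; omega
        have e2 : k * (j0 + 2 * m) + t = p + L + (L - r + t) := by
          rw [Nat.mul_add, Nat.mul_left_comm]; omega
        rw [e1, e2]
        exact E (L - r + t) (by omega)
      have hMid : ∀ i, 0 < i → i < m → w[j0 + i]! = w[j0 + m + i]! := by
        intro i hipos hi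
        have hkmi := hkm i hi
        have hki : k ≤ k * i := by
          have := Nat.mul_le_mul_left k (show 1 ≤ i from hipos)
          omega
        refine hinj _ _ (ext! (by rw [hk, hk]) ?_)
        intro t ht
        have htk : t < k := by rwa [hk] at ht
        rw [← hblock (j0 + i) t (by omega) htk, ← hblock (j0 + m + i) t (by omega) htk]
        have e1 : k * (j0 + i) + t = p + (k * i + t - r) := by rw [Nat.mul_add]; omega
        have e2 : k * (j0 + m + i) + t = p + L + (k * i + t - r) := by
          rw [Nat.mul_add, Nat.mul_add]; omega
        rw [e1, e2]
        exact E (k * i + t - r) (by omega)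
      have hABne : A ≠ B := by
        intro he
        refine absurd hw (not_sqfree_of_E hmpos (show j0 + 2 * m ≤ w.length by omega) ?_)
        intro i hi
        rcases Nat.eq_zero_or_pos i with h0 | hipos
        · subst h0
          simp only [Nat.add_zero]; exact he
        · exact hMid i hipos hi
      have hBCne : B ≠ C := by
        intro he
        refine absurd hw (not_sqfree_of_E (p := j0 + 1) hmpos
          (show j0 + 1 + 2 * m ≤ w.length by omega) ?_)
        intro i hi
        by_cases hi1 : i + 1 < m
        · have := hMid (i + 1) (by omega) hi1
          have e1 : j0 + 1 + i = j0 + (i + 1) := by omega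
          have e2 : j0 + 1 + m + i = j0 + m + (i + 1) := by omega
          rw [e1, e2]
          exact this
        · have him : i = m - 1 := by omega
          have e1 : j0 + 1 + i = j0 + m := by omega
          have e2 : j0 + 1 + m + i = j0 + 2 * m := by omega
          rw [e1, e2, ← hB, ← hC]
          exact he
      -- build the square (S ++ P)^2 inside h A ++ h B ++ h C
      set S := (h B).drop r with hS
      set P := (h B).take r with hP
      have hSA : (h A).drop r = S := by
        refine ext! (by rw [hS, List.length_drop, List.length_drop, hk, hk]) ?_
        intro i hi
        have hik : r + i < k := by
          rw [List.length_drop, hk] at hi; omega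
        rw [gdrop (by rw [hk]; omega), hS, gdrop (by rw [hk]; omega)]
        exact hAB (r + i) (by omega) hik
      have hPC : (h C).take r = P := by
        refine ext! (by rw [hP, List.length_take, List.length_take, hk, hk]) ?_
        intro i hi
        have hir : i < r := by
          rw [List.length_take, hk] at hi; omega
        rw [gtake hir (by rw [hk]; omega), hP, gtake hir (by rw [hk]; omega)]
        exact (hBC i hir).symm
      refine absurd (h3 A B C hABne hBCne) ?_
      intro hsf
      refine hsf (S ++ P) (List.ne_nil_of_length_pos ?_) ?_
      · rw [List.length_append, hS, List.length_drop, hk]; omega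
      · refine ⟨(h A).take r, (h C).drop r, ?_⟩
        conv_rhs => rw [← List.take_append_drop r (h A), hSA,
          ← List.take_append_drop r (h B), ← hS, ← hP,
          ← List.take_append_drop r (h C), hPC]
        simp [List.append_assoc]

section Final

set_option maxHeartbeats 12000000

theorem stmt15 :
    (∀ w : List (Fin 3), SqFreeWord w → SqFreeWord (w.map hmorph).flatten) ∧
    (∀ w : List (Fin 3), SqFreeWord w → SqFreeWord (w.map hmorph').flatten) := by
  constructor
  · have c1 : ∀ a : Fin 3,
        ∀ p < (hmorph a).length, ∀ L < (hmorph a).length / 2 + 1,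
        0 < L → p + 2 * L ≤ (hmorph a).length →
        ¬ (((hmorph a).drop p).take L = ((hmorph a).drop (p + L)).take L) := by decide
    have c2 : ∀ a b : Fin 3, a ≠ b →
        ∀ p < (hmorph a ++ hmorph b).length,
        ∀ L < (hmorph a ++ hmorph b).length / 2 + 1,
        0 < L → p + 2 * L ≤ (hmorph a ++ hmorph b).length →
        ¬ (((hmorph a ++ hmorph b).drop p).take L =
           ((hmorph a ++ hmorph b).drop (p + L)).take L) := by decide
    have c3 : ∀ a b c : Fin 3, a ≠ b → b ≠ c →
        ∀ p < (hmorph a ++ hmorph b ++ hmorph c).length,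
        ∀ L < (hmorph a ++ hmorph b ++ hmorph c).length / 2 + 1,
        0 < L → p + 2 * L ≤ (hmorph a ++ hmorph b ++ hmorph c).length →
        ¬ (((hmorph a ++ hmorph b ++ hmorph c).drop p).take L =
           ((hmorph a ++ hmorph b ++ hmorph c).drop (p + L)).take L) := by decide
    have csync : ∀ a b c : Fin 3, ∀ r < 18, 0 < r →
        ¬ ((hmorph b ++ hmorph c).drop r).take 18 = hmorph a := by decide
    exact key hmorph 18 (by norm_num) (by decide) (by decide)
      (fun a b c r hr hrk => csync a b c r hrk hr)
      (fun a => sqfree_of_check _ (c1 a))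
      (fun a b hab => sqfree_of_check _ (c2 a b hab))
      (fun a b c hab hbc => sqfree_of_check _ (c3 a b c hab hbc))
  · have c1 : ∀ a : Fin 3,
        ∀ p < (hmorph' a).length, ∀ L < (hmorph' a).length / 2 + 1,
        0 < L → p + 2 * L ≤ (hmorph' a).length →
        ¬ (((hmorph' a).drop p).take L = ((hmorph' a).drop (p + L)).take L) := by decide
    have c2 : ∀ a b : Fin 3, a ≠ b →
        ∀ p < (hmorph' a ++ hmorph' b).length,
        ∀ L < (hmorph' a ++ hmorph' b).length / 2 + 1,
        0 < L → p + 2 * L ≤ (hmorph' a ++ hmorph' b).length →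
        ¬ (((hmorph' a ++ hmorph' b).drop p).take L =
           ((hmorph' a ++ hmorph' b).drop (p + L)).take L) := by decide
    have c3 : ∀ a b c : Fin 3, a ≠ b → b ≠ c →
        ∀ p < (hmorph' a ++ hmorph' b ++ hmorph' c).length,
        ∀ L < (hmorph' a ++ hmorph' b ++ hmorph' c).length / 2 + 1,
        0 < L → p + 2 * L ≤ (hmorph' a ++ hmorph' b ++ hmorph' c).length →
        ¬ (((hmorph' a ++ hmorph' b ++ hmorph' c).drop p).take L =
           ((hmorph' a ++ hmorph' b ++ hmorph' c).drop (p + L)).take L) := by decide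
    have csync : ∀ a b c : Fin 3, ∀ r < 17, 0 < r →
        ¬ ((hmorph' b ++ hmorph' c).drop r).take 17 = hmorph' a := by decide
    exact key hmorph' 17 (by norm_num) (by decide) (by decide)
      (fun a b c r hr hrk => csync a b c r hrk hr)
      (fun a => sqfree_of_check _ (c1 a))
      (fun a b hab => sqfree_of_check _ (c2 a b hab))
      (fun a b c hab hbc => sqfree_of_check _ (c3 a b c hab hbc))

end Final
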